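/- Let G be a simple mixed graph on n vertices and let u, v be distinct vertices. (i) If E u v = 0 (no edge joins u and v), then ν_{2n−1}(G) ≤ (1/2)·(d u + d v + d⁺ u + d⁺ v) and ν_{2n−1}(G) ≤ (1/2)·(d u + d v + d⁻ u + d⁻ v). (ii) If A u v = 0 (there is no arc from u to v), then ν_{2n−1}(G) ≤ (1/2)·(d u + d v + d⁺ u + d⁻ v). -/

import Mathlib

set_option linter.unusedSectionVars false

open Matrix Finset Polynomial

variable {V : Type*} [Fintype V] [DecidableEq V]

/-- Undirected adjacency matrix of the mixed graph with edge-multiplicity function `E`: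
`(u,v)`-entry `E u v` for `u ≠ v`, and `(v,v)`-entry `2 * E v v`. -/
def Au (E : V → V → ℕ) : Matrix V V ℝ :=
  Matrix.of fun u v => if u = v then ((2 * E v v : ℕ) : ℝ) else ((E u v : ℕ) : ℝ)

/-- Arc matrix of the mixed graph with arc-multiplicity function `A`. -/
def Bm (A : V → V → ℕ) : Matrix V V ℝ := Matrix.of fun u v => ((A u v : ℕ) : ℝ)

/-- Undirected degree `d v`. -/
def dU (E : V → V → ℕ) (v : V) : ℕ :=
  (∑ u ∈ Finset.univ.filter (fun u => u ≠ v), E v u) + 2 * E v v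

/-- Out-degree `d⁺ v`. -/
def dOut (A : V → V → ℕ) (v : V) : ℕ := ∑ u, A v u

/-- In-degree `d⁻ v`. -/
def dIn (A : V → V → ℕ) (v : V) : ℕ := ∑ u, A u v

/-- Integrated adjacency matrix `𝓘(G) = [[Aᵤ, B], [Bᵀ, Aᵤ]]`. -/
def intAdj (E A : V → V → ℕ) : Matrix (V ⊕ V) (V ⊕ V) ℝ :=
  Matrix.fromBlocks (Au E) (Bm A) (Bm A)ᵀ (Au E)

/-- Integrated degree matrix `𝓘ᴰ(G)`. -/
def intDeg (E A : V → V → ℕ) : Matrix (V ⊕ V) (V ⊕ V) ℝ :=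
  Matrix.diagonal (Sum.elim (fun v => ((dU E v + dOut A v : ℕ) : ℝ))
    (fun v => ((dU E v + dIn A v : ℕ) : ℝ)))

/-- Integrated Laplacian matrix `𝓘ᴸ(G) = 𝓘ᴰ(G) - 𝓘(G)`. -/
def intLap (E A : V → V → ℕ) : Matrix (V ⊕ V) (V ⊕ V) ℝ := intDeg E A - intAdj E A

/-- Integrated signless Laplacian matrix `𝓘Q(G) = 𝓘ᴰ(G) + 𝓘(G)`. -/
def intQ (E A : V → V → ℕ) : Matrix (V ⊕ V) (V ⊕ V) ℝ := intDeg E A + intAdj E A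

/-- A mixed graph is simple: multiplicities at most 1, no loops, no directed loops. -/
def IsSimple (E A : V → V → ℕ) : Prop :=
  (∀ u v, E u v ≤ 1) ∧ (∀ u v, A u v ≤ 1) ∧ (∀ v, E v v = 0) ∧ (∀ v, A v v = 0)

/-- Number of edges (excluding loops): `e(G) = (1/2)·Σ_{u ≠ v} E u v`. -/
noncomputable def numEdges (E : V → V → ℕ) : ℝ :=
  (∑ u, ∑ v ∈ Finset.univ.filter (fun v => v ≠ u), (E u v : ℝ)) / 2

/-- Number of loops: `l(G) = Σ_v E v v`. -/
noncomputable def numLoops (E : V → V → ℕ) : ℝ := ∑ v, (E v v : ℝ)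

/-- Number of arcs (including directed loops): `a(G) = Σ_{u,v} A u v`. -/
noncomputable def numArcs (A : V → V → ℕ) : ℝ := ∑ u, ∑ v, (A u v : ℝ)

lemma intAdj_isHermitian (E A : V → V → ℕ) (hE : ∀ u v, E u v = E v u) :
    (intAdj E A).IsHermitian := by
  have hAu : (Au E)ᵀ = Au E := by
    ext u v
    by_cases h : u = v
    · subst h; rfl
    · simp [Au, Matrix.transpose_apply, h, Ne.symm h, hE u v]
  show (intAdj E A)ᴴ = intAdj E A
  rw [Matrix.conjTranspose_eq_transpose_of_trivial]
  unfold intAdj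
  rw [Matrix.fromBlocks_transpose, hAu, Matrix.transpose_transpose]

lemma intLap_isHermitian (E A : V → V → ℕ) (hE : ∀ u v, E u v = E v u) :
    (intLap E A).IsHermitian :=
  (Matrix.isHermitian_diagonal _).sub (intAdj_isHermitian E A hE)

lemma intQ_isHermitian (E A : V → V → ℕ) (hE : ∀ u v, E u v = E v u) :
    (intQ E A).IsHermitian :=
  (Matrix.isHermitian_diagonal _).add (intAdj_isHermitian E A hE)

/-- The non-increasing rearrangement of a finite tuple of reals. -/
noncomputable def sortDesc {N : ℕ} (f : Fin N → ℝ) : Fin N → ℝ :=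
  fun i => (f ∘ Tuple.sort f) i.rev

/-- The eigenvalues of the integrated Laplacian matrix `𝓘ᴸ(G)`, in non-increasing order:
`nuT E A hE i` is `ν_{i+1}(G)` (0-indexed). -/
noncomputable def nuT {n : ℕ} (E A : Fin n → Fin n → ℕ) (hE : ∀ u v, E u v = E v u) :
    Fin (n + n) → ℝ :=
  sortDesc (fun i => (intLap_isHermitian E A hE).eigenvalues (finSumFinEquiv.symm i))

/-- The eigenvalues of the integrated signless Laplacian matrix `𝓘Q(G)`, in non-increasing
order: `xiT E A hE i` is `ξ_{i+1}(G)` (0-indexed). -/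
noncomputable def xiT {n : ℕ} (E A : Fin n → Fin n → ℕ) (hE : ∀ u v, E u v = E v u) :
    Fin (n + n) → ℝ :=
  sortDesc (fun i => (intQ_isHermitian E A hE).eigenvalues (finSumFinEquiv.symm i))

/-- The eigenvalues of the integrated adjacency matrix `𝓘(G)`, in non-increasing order:
`lamT E A hE i` is `λ_{i+1}(G)` (0-indexed). -/
noncomputable def lamT {n : ℕ} (E A : Fin n → Fin n → ℕ) (hE : ∀ u v, E u v = E v u) :
    Fin (n + n) → ℝ :=
  sortDesc (fun i => (intAdj_isHermitian E A hE).eigenvalues (finSumFinEquiv.symm i))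


lemma exists_two_eigs {N : Type*} [Fintype N] [DecidableEq N] {M : Matrix N N ℝ}
    (hM : M.IsHermitian) {x y : N → ℝ} {c : ℝ} (hc : 0 ≤ c)
    (hx : x ≠ 0) (hy : y ≠ 0) (hxy : x ⬝ᵥ y = 0) (hMx : M *ᵥ x = 0)
    (hq : y ⬝ᵥ (M *ᵥ y) ≤ c * (y ⬝ᵥ y)) :
    ∃ i j : N, i ≠ j ∧ hM.eigenvalues i ≤ c ∧ hM.eigenvalues j ≤ c := by
  set U : Matrix N N ℝ := (hM.eigenvectorUnitary : Matrix N N ℝ) with hU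
  have hU1 : star U * U = 1 := Matrix.mem_unitaryGroup_iff'.mp hM.eigenvectorUnitary.2
  have hU2 : U * star U = 1 := Matrix.mem_unitaryGroup_iff.mp hM.eigenvectorUnitary.2
  have hstar : star U = Uᵀ := Matrix.conjTranspose_eq_transpose_of_trivial U
  set lam := hM.eigenvalues with hlam
  set T : (N → ℝ) → N → ℝ := fun z => star U *ᵥ z with hT
  have hTz : ∀ z : N → ℝ, T z = z ᵥ* U := by
    intro z; rw [hT]; simp only [hstar, Matrix.mulVec_transpose]
  -- (A) inner products preserved
  have hA : ∀ z w : N → ℝ, T z ⬝ᵥ T w = z ⬝ᵥ w := by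
    intro z w
    rw [hTz z, ← Matrix.dotProduct_mulVec,
      show T w = star U *ᵥ w from rfl, Matrix.mulVec_mulVec, hU2, Matrix.one_mulVec]
  -- (B) quadratic form diagonalized
  have hB : ∀ z w : N → ℝ, z ⬝ᵥ (M *ᵥ w) = ∑ i, lam i * (T z i * T w i) := by
    intro z w
    conv_lhs => rw [hM.spectral_theorem, Unitary.conjStarAlgAut_apply]
    rw [← Matrix.mulVec_mulVec, ← Matrix.mulVec_mulVec,
      Matrix.dotProduct_mulVec, ← hTz z]
    show T z ⬝ᵥ (Matrix.diagonal (RCLike.ofReal ∘ lam) *ᵥ T w) = _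
    simp only [dotProduct, Matrix.mulVec_diagonal, Function.comp_apply,
      RCLike.ofReal_real_eq_id, id_eq]
    exact Finset.sum_congr rfl fun i _ => by ring
  -- (C) kernel vector has coefficients only at zero eigenvalues
  have hC : ∀ i, lam i * T x i = 0 := by
    have h1 : star U *ᵥ (M *ᵥ x) = Matrix.diagonal (RCLike.ofReal ∘ lam) *ᵥ T x := by
      conv_lhs => rw [hM.spectral_theorem, Unitary.conjStarAlgAut_apply]
      rw [Matrix.mulVec_mulVec, Matrix.mulVec_mulVec, ← Matrix.mul_assoc, ← Matrix.mul_assoc,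
        hU1, Matrix.one_mul, ← Matrix.mulVec_mulVec]
    rw [hMx, Matrix.mulVec_zero] at h1
    intro i
    have := congrFun h1.symm i
    simpa [Matrix.mulVec_diagonal] using this
  by_contra H
  push_neg at H
  -- find i₀ with T x i₀ ≠ 0
  have hTx : T x ≠ 0 := by
    intro h
    have : x ⬝ᵥ x = 0 := by rw [← hA x x, h]; simp
    exact hx (dotProduct_self_eq_zero.mp this)
  obtain ⟨i₀, hi₀⟩ : ∃ i, T x i ≠ 0 := by
    by_contra h; push_neg at h; exact hTx (funext h)
  have hlam0 : lam i₀ = 0 := by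
    have := hC i₀
    rcases mul_eq_zero.mp this with h | h
    · exact h
    · exact absurd h hi₀
  have hother : ∀ j, j ≠ i₀ → c < lam j := by
    intro j hj
    by_contra h
    push_neg at h
    have := H j i₀ hj h
    rw [hlam0] at this
    linarith
  have hTxj : ∀ j, j ≠ i₀ → T x j = 0 := by
    intro j hj
    have := hC j
    rcases mul_eq_zero.mp this with h | h
    · exact absurd h (by have := hother j hj; intro he; rw [he] at this; exact absurd this (by linarith))
    · exact h
  -- b i₀ = 0
  have hbi₀ : T y i₀ = 0 := by
    have h0 : T x ⬝ᵥ T y = 0 := by rw [hA]; exact hxy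
    have : ∑ i, T x i * T y i = T x i₀ * T y i₀ := by
      apply Finset.sum_eq_single
      · intro j _ hj; rw [hTxj j hj, zero_mul]
      · intro h; exact absurd (Finset.mem_univ i₀) h
    rw [dotProduct, this] at h0
    exact (mul_eq_zero.mp h0).resolve_left hi₀
  -- contradiction with hq
  have hqy : ∑ i, lam i * (T y i * T y i) ≤ c * ∑ i, T y i * T y i := by
    rw [← hB y y, show (∑ i, T y i * T y i) = T y ⬝ᵥ T y from rfl, hA y y]; exact hq
  have hTy : T y ≠ 0 := by
    intro h
    have : y ⬝ᵥ y = 0 := by rw [← hA y y, h]; simp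
    exact hy (dotProduct_self_eq_zero.mp this)
  obtain ⟨i₁, hi₁⟩ : ∃ i, T y i ≠ 0 := by
    by_contra h; push_neg at h; exact hTy (funext h)
  have hi₁0 : i₁ ≠ i₀ := fun h => hi₁ (h ▸ hbi₀)
  have key : 0 < ∑ i, (lam i - c) * (T y i * T y i) := by
    apply Finset.sum_pos'
    · intro i _
      rcases eq_or_ne i i₀ with h | h
      · rw [h, hbi₀]; simp
      · exact mul_nonneg (by have := hother i h; linarith) (mul_self_nonneg _)
    · exact ⟨i₁, Finset.mem_univ i₁, mul_pos (by have := hother i₁ hi₁0; linarith)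
        (mul_self_pos.mpr hi₁)⟩
  have : ∑ i, (lam i - c) * (T y i * T y i)
      = ∑ i, lam i * (T y i * T y i) - c * ∑ i, T y i * T y i := by
    rw [Finset.mul_sum, ← Finset.sum_sub_distrib]
    exact Finset.sum_congr rfl fun i _ => by ring
  rw [this] at key
  linarith


lemma sortDesc_le {N : ℕ} (f : Fin N → ℝ) (c : ℝ)
    (h : ∃ i j : Fin N, i ≠ j ∧ f i ≤ c ∧ f j ≤ c) (hk : N - 2 < N) (hN : 2 ≤ N) :
    sortDesc f ⟨N - 2, hk⟩ ≤ c := by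
  obtain ⟨i, j, hij, hi, hj⟩ := h
  set σ := Tuple.sort f with hσ
  have hmono := Tuple.monotone_sort f
  have hrev : (⟨N - 2, hk⟩ : Fin N).rev = ⟨1, by omega⟩ := by
    ext
    simp only [Fin.val_rev]
    omega
  set i' := σ.symm i with hi'
  set j' := σ.symm j with hj'
  have hij' : i' ≠ j' := fun h => hij (by rw [hi', hj'] at h; exact σ.symm.injective h)
  set k := max i' j' with hkk
  have h1k : (⟨1, by omega⟩ : Fin N) ≤ k := by
    rw [Fin.le_def]
    have hne : (i' : ℕ) ≠ (j' : ℕ) := fun h => hij' (Fin.val_injective h)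
    have hmax : (k : ℕ) = max (i' : ℕ) (j' : ℕ) := by
      rcases max_cases i' j' with ⟨h1, h2⟩ | ⟨h1, h2⟩ <;> rw [hkk, h1] <;> omega
    show 1 ≤ (k : ℕ)
    omega
  have hfk : f (σ k) ≤ c := by
    rcases max_choice i' j' with h | h <;> rw [hkk, h]
    · rw [hi', Equiv.apply_symm_apply]; exact hi
    · rw [hj', Equiv.apply_symm_apply]; exact hj
  have : sortDesc f ⟨N - 2, hk⟩ = (f ∘ σ) ⟨1, by omega⟩ := by
    rw [sortDesc, hrev]
  rw [this]
  exact le_trans (hmono h1k) hfk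


variable {V : Type*} [Fintype V] [DecidableEq V]

lemma sum_Au (E : V → V → ℕ) (w : V) : ∑ z, Au E w z = ((dU E w : ℕ) : ℝ) := by
  rw [← Finset.sum_erase_add _ _ (Finset.mem_univ w)]
  have h1 : ∀ z ∈ Finset.univ.erase w, Au E w z = ((E w z : ℕ) : ℝ) := by
    intro z hz
    have hwz : w ≠ z := (Finset.ne_of_mem_erase hz).symm
    simp [Au, hwz]
  rw [Finset.sum_congr rfl h1, show Au E w w = ((2 * E w w : ℕ) : ℝ) by simp [Au]]
  rw [dU]
  push_cast
  rw [← Finset.filter_ne' Finset.univ w]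

lemma sum_Bm (A : V → V → ℕ) (w : V) : ∑ z, Bm A w z = ((dOut A w : ℕ) : ℝ) := by
  simp [Bm, dOut]

lemma sum_BmT (A : V → V → ℕ) (w : V) : ∑ z, (Bm A)ᵀ w z = ((dIn A w : ℕ) : ℝ) := by
  simp [Bm, dIn]

lemma intLap_row_sum (E A : V → V → ℕ) (w : V ⊕ V) : ∑ z, intLap E A w z = 0 := by
  have hd : ∀ z : V ⊕ V, ∑ z', intDeg E A z z' =
      Sum.elim (fun v => ((dU E v + dOut A v : ℕ) : ℝ))
        (fun v => ((dU E v + dIn A v : ℕ) : ℝ)) z := by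
    intro z
    simp [intDeg, Matrix.diagonal_apply, Finset.sum_ite_eq]
  simp only [intLap, Matrix.sub_apply, Finset.sum_sub_distrib, hd]
  cases w with
  | inl w =>
      rw [show ∑ z, intAdj E A (Sum.inl w) z = ∑ z, Au E w z + ∑ z, Bm A w z by
        rw [Fintype.sum_sum_type]; rfl]
      rw [sum_Au, sum_Bm]
      push_cast
      simp
  | inr w =>
      rw [show ∑ z, intAdj E A (Sum.inr w) z = ∑ z, (Bm A)ᵀ w z + ∑ z, Au E w z by
        rw [Fintype.sum_sum_type]; rfl]
      rw [sum_Au, sum_BmT]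
      push_cast
      simp [add_comm]

lemma intLap_diag_inl (E A : V → V → ℕ) (u : V) (hEd : E u u = 0) :
    intLap E A (Sum.inl u) (Sum.inl u) = ((dU E u + dOut A u : ℕ) : ℝ) := by
  simp [intLap, intDeg, intAdj, Au, hEd]

lemma intLap_diag_inr (E A : V → V → ℕ) (u : V) (hEd : E u u = 0) :
    intLap E A (Sum.inr u) (Sum.inr u) = ((dU E u + dIn A u : ℕ) : ℝ) := by
  simp [intLap, intDeg, intAdj, Au, hEd]

lemma nu_bound {n : ℕ} (E A : Fin n → Fin n → ℕ) (hE : ∀ u v, E u v = E v u)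
    (a b : Fin n ⊕ Fin n) (hab : a ≠ b)
    (hLab : intLap E A a b = 0) (hLba : intLap E A b a = 0)
    (hpos : 0 ≤ intLap E A a a + intLap E A b b)
    (hk : n + n - 2 < n + n) :
    nuT E A hE ⟨n + n - 2, hk⟩ ≤ (intLap E A a a + intLap E A b b) / 2 := by
  have hn : 1 ≤ n := by omega
  set L := intLap E A with hL
  set c := (L a a + L b b) / 2 with hc
  set x : (Fin n ⊕ Fin n) → ℝ := fun _ => 1 with hxdef
  set y : (Fin n ⊕ Fin n) → ℝ := Pi.single a 1 - Pi.single b 1 with hydef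
  have hM := intLap_isHermitian E A hE
  have hcn : (0:ℝ) ≤ c := by rw [hc]; positivity
  have hx : x ≠ 0 := by
    intro h
    have := congrFun h (Sum.inl ⟨0, hn⟩)
    simp [hxdef] at this
  have hy : y ≠ 0 := by
    intro h
    have := congrFun h a
    rw [hydef] at this
    simp [Pi.single_eq_same, Pi.single_eq_of_ne hab] at this
  have hxy : x ⬝ᵥ y = 0 := by
    rw [hydef, dotProduct_sub]
    simp [hxdef, dotProduct_single]
  have hMx : L *ᵥ x = 0 := by
    funext w
    have := intLap_row_sum E A w
    simpa [Matrix.mulVec, dotProduct, hxdef] using this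
  have hyy : y ⬝ᵥ y = 2 := by
    rw [hydef]
    simp [dotProduct_sub, sub_dotProduct, dotProduct_single,
      single_dotProduct, Pi.single_eq_same, Pi.single_eq_of_ne hab,
      Pi.single_eq_of_ne hab.symm]
    norm_num
  have hqv : y ⬝ᵥ (L *ᵥ y) = L a a + L b b - L a b - L b a := by
    rw [hydef, Matrix.mulVec_sub, Matrix.mulVec_single, Matrix.mulVec_single]
    simp [dotProduct_sub, sub_dotProduct, single_dotProduct]
    ring
  have hq : y ⬝ᵥ (L *ᵥ y) ≤ c * (y ⬝ᵥ y) := by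
    rw [hqv, hyy, hLab, hLba, hc]
    ring_nf
    linarith
  obtain ⟨i, j, hij, hi, hj⟩ := exists_two_eigs hM hcn hx hy hxy hMx hq
  have : nuT E A hE ⟨n + n - 2, hk⟩ ≤ c := by
    rw [nuT]
    apply sortDesc_le _ c _ hk (by omega)
    refine ⟨finSumFinEquiv i, finSumFinEquiv j, ?_, ?_, ?_⟩
    · intro h; exact hij (finSumFinEquiv.injective h)
    · simpa using hi
    · simpa using hj
  exact this

/-- for distinct vertices `u, v` of a simple mixed graph `G`:
(i) if no edge joins `u` and `v` then `ν_{2n−1}(G) ≤ (d u + d v + d⁺ u + d⁺ v)/2` and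
`ν_{2n−1}(G) ≤ (d u + d v + d⁻ u + d⁻ v)/2`;
(ii) if there is no arc from `u` to `v` then `ν_{2n−1}(G) ≤ (d u + d v + d⁺ u + d⁻ v)/2`. -/
theorem stmt12 (n : ℕ) (E A : Fin n → Fin n → ℕ) (hE : ∀ u v, E u v = E v u)
    (hS : IsSimple E A) (u v : Fin n) (huv : u ≠ v) :
    (E u v = 0 →
      nuT E A hE ⟨n + n - 2, by have := u.pos; omega⟩ ≤
          ((dU E u + dU E v + dOut A u + dOut A v : ℕ) : ℝ) / 2 ∧
        nuT E A hE ⟨n + n - 2, by have := u.pos; omega⟩ ≤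
          ((dU E u + dU E v + dIn A u + dIn A v : ℕ) : ℝ) / 2) ∧
    (A u v = 0 →
      nuT E A hE ⟨n + n - 2, by have := u.pos; omega⟩ ≤
        ((dU E u + dU E v + dOut A u + dIn A v : ℕ) : ℝ) / 2) := by
  obtain ⟨hE1, hA1, hEd, hAd⟩ := hS
  have hk : n + n - 2 < n + n := by have := u.pos; omega
  constructor
  · intro hEuv
    have hEvu : E v u = 0 := by rw [← hE u v]; exact hEuv
    constructor
    · -- out-degrees: a = inl u, b = inl v
      have hab : (Sum.inl u : Fin n ⊕ Fin n) ≠ Sum.inl v := by simp [huv]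
      have hLab : intLap E A (Sum.inl u) (Sum.inl v) = 0 := by
        simp [intLap, intDeg, intAdj, Au, huv, hEuv, Matrix.diagonal_apply_ne]
      have hLba : intLap E A (Sum.inl v) (Sum.inl u) = 0 := by
        simp [intLap, intDeg, intAdj, Au, huv.symm, hEvu, Matrix.diagonal_apply_ne]
      have h := nu_bound E A hE (Sum.inl u) (Sum.inl v) hab hLab hLba
        (by rw [intLap_diag_inl E A u (hEd u), intLap_diag_inl E A v (hEd v)]; positivity) hk
      rw [intLap_diag_inl E A u (hEd u), intLap_diag_inl E A v (hEd v)] at h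
      convert h using 2
      push_cast
      ring
    · -- in-degrees: a = inr u, b = inr v
      have hab : (Sum.inr u : Fin n ⊕ Fin n) ≠ Sum.inr v := by simp [huv]
      have hLab : intLap E A (Sum.inr u) (Sum.inr v) = 0 := by
        simp [intLap, intDeg, intAdj, Au, huv, hEuv, Matrix.diagonal_apply_ne]
      have hLba : intLap E A (Sum.inr v) (Sum.inr u) = 0 := by
        simp [intLap, intDeg, intAdj, Au, huv.symm, hEvu, Matrix.diagonal_apply_ne]
      have h := nu_bound E A hE (Sum.inr u) (Sum.inr v) hab hLab hLba
        (by rw [intLap_diag_inr E A u (hEd u), intLap_diag_inr E A v (hEd v)]; positivity) hk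
      rw [intLap_diag_inr E A u (hEd u), intLap_diag_inr E A v (hEd v)] at h
      convert h using 2
      push_cast
      ring
  · intro hAuv
    have hab : (Sum.inl u : Fin n ⊕ Fin n) ≠ Sum.inr v := by simp
    have hLab : intLap E A (Sum.inl u) (Sum.inr v) = 0 := by
      simp [intLap, intDeg, intAdj, Bm, hAuv]
    have hLba : intLap E A (Sum.inr v) (Sum.inl u) = 0 := by
      simp [intLap, intDeg, intAdj, Bm, hAuv]
    have h := nu_bound E A hE (Sum.inl u) (Sum.inr v) hab hLab hLba
      (by rw [intLap_diag_inl E A u (hEd u), intLap_diag_inr E A v (hEd v)]; positivity) hk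
    rw [intLap_diag_inl E A u (hEd u), intLap_diag_inr E A v (hEd v)] at h
    convert h using 2
    push_cast
    ring
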